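/- Bound on ζᶜ for the time-reversal-symmetric cycle with a projective measurement channel: let U be a 2×2 unitary matrix, (e₊, e₋) an orthonormal basis of ℂ², and Φ(X) = π₁Xπ₁ + π₂Xπ₂ where π₁ = vv†, π₂ = ww† for an orthonormal basis (v, w) of ℂ². With V = U†, the transition probability ζᶜ := e₋† U† Φ(U e₊e₊† U†) U e₋ satisfies ζᶜ = 2p₁(1 − p₁) where p₁ = |v† U e₊|²; in particular 0 ≤ ζᶜ ≤ 1/2, with the value 1/2 attained exactly when p₁ = 1/2. -/

import Mathlib

open Matrix

lemma comp2 (v w : Fin 2 → ℂ) (hv : star v ⬝ᵥ v = 1) (hw : star w ⬝ᵥ w = 1)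
    (hvw : star v ⬝ᵥ w = 0) :
    vecMulVec v (star v) + vecMulVec w (star w) = 1 := by
  simp only [dotProduct, Fin.sum_univ_two, Pi.star_apply, Complex.star_def] at hv hw hvw
  have hwv : (starRingEnd ℂ) (w 0) * v 0 + (starRingEnd ℂ) (w 1) * v 1 = 0 := by
    have := congrArg (starRingEnd ℂ) hvw
    simp only [map_add, _root_.map_mul, Complex.conj_conj, map_zero] at this
    linear_combination this
  let A : Matrix (Fin 2) (Fin 2) ℂ :=
    !![(starRingEnd ℂ) (v 0), (starRingEnd ℂ) (v 1);
       (starRingEnd ℂ) (w 0), (starRingEnd ℂ) (w 1)]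
  have h1 : A * Aᴴ = 1 := by
    ext i j
    fin_cases i <;> fin_cases j <;>
      simp [A, mul_apply, Fin.sum_univ_two, Matrix.one_apply, Complex.star_def]
    · linear_combination hv
    · linear_combination hvw
    · linear_combination hwv
    · linear_combination hw
  have h2 : Aᴴ * A = 1 := mul_eq_one_comm.mp h1
  have h3 : Aᴴ * A = vecMulVec v (star v) + vecMulVec w (star w) := by
    ext i j
    fin_cases i <;> fin_cases j <;>
      simp [A, mul_apply, Fin.sum_univ_two, vecMulVec_apply, Complex.star_def]
  rw [← h3, h2]

theorem zeta_c_bound_projective_time_reversal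
    (ep em v w : Fin 2 → ℂ)
    (hep : star ep ⬝ᵥ ep = 1) (hem : star em ⬝ᵥ em = 1) (hepm : star ep ⬝ᵥ em = 0)
    (hv : star v ⬝ᵥ v = 1) (hw : star w ⬝ᵥ w = 1) (hvw : star v ⬝ᵥ w = 0)
    (U : Matrix (Fin 2) (Fin 2) ℂ)
    (hU : Uᴴ * U = 1) (hU' : U * Uᴴ = 1)
    (Φ : Matrix (Fin 2) (Fin 2) ℂ → Matrix (Fin 2) (Fin 2) ℂ)
    (hΦ : ∀ X, Φ X = vecMulVec v (star v) * X * vecMulVec v (star v) +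
        vecMulVec w (star w) * X * vecMulVec w (star w))
    (ζc : ℂ)
    (hζc : ζc = star em ⬝ᵥ ((Uᴴ * Φ (U * vecMulVec ep (star ep) * Uᴴ) * U) *ᵥ em))
    (p₁ : ℝ) (hp₁ : p₁ = ‖star v ⬝ᵥ (U *ᵥ ep)‖ ^ 2) :
    ζc = ((2 * p₁ * (1 - p₁) : ℝ) : ℂ) ∧
      0 ≤ 2 * p₁ * (1 - p₁) ∧ 2 * p₁ * (1 - p₁) ≤ 1 / 2 ∧
      (2 * p₁ * (1 - p₁) = 1 / 2 ↔ p₁ = 1 / 2) := by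
  have hP : vecMulVec v (star v) + vecMulVec w (star w) = 1 := comp2 v w hv hw hvw
  have hQ : vecMulVec ep (star ep) + vecMulVec em (star em) = 1 := comp2 ep em hep hem hepm
  set a := star v ⬝ᵥ (U *ᵥ ep) with ha
  set b := star v ⬝ᵥ (U *ᵥ em) with hb
  set c := star w ⬝ᵥ (U *ᵥ ep) with hc
  set d := star w ⬝ᵥ (U *ᵥ em) with hd
  have key1 : a * (starRingEnd ℂ) a + c * (starRingEnd ℂ) c = 1 := by
    have e1 : a * (starRingEnd ℂ) a + c * (starRingEnd ℂ) c
        = star ep ⬝ᵥ ((Uᴴ * (vecMulVec v (star v) + vecMulVec w (star w)) * U) *ᵥ ep) := by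
      simp only [ha, hc, dotProduct, mulVec, mul_apply, vecMulVec_apply, conjTranspose_apply,
        Fin.sum_univ_two, Pi.star_apply, Complex.star_def, map_add, _root_.map_mul,
        Matrix.add_apply, Complex.conj_conj]
      ring
    rw [e1, hP, mul_one, hU]
    simpa using hep
  have key3 : b * (starRingEnd ℂ) b + d * (starRingEnd ℂ) d = 1 := by
    have e3 : b * (starRingEnd ℂ) b + d * (starRingEnd ℂ) d
        = star em ⬝ᵥ ((Uᴴ * (vecMulVec v (star v) + vecMulVec w (star w)) * U) *ᵥ em) := by
      simp only [hb, hd, dotProduct, mulVec, mul_apply, vecMulVec_apply, conjTranspose_apply,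
        Fin.sum_univ_two, Pi.star_apply, Complex.star_def, map_add, _root_.map_mul,
        Matrix.add_apply, Complex.conj_conj]
      ring
    rw [e3, hP, mul_one, hU]
    simpa using hem
  have key2 : a * (starRingEnd ℂ) a + b * (starRingEnd ℂ) b = 1 := by
    have e2 : a * (starRingEnd ℂ) a + b * (starRingEnd ℂ) b
        = star v ⬝ᵥ ((U * (vecMulVec ep (star ep) + vecMulVec em (star em)) * Uᴴ) *ᵥ v) := by
      simp only [ha, hb, dotProduct, mulVec, mul_apply, vecMulVec_apply, conjTranspose_apply,
        Fin.sum_univ_two, Pi.star_apply, Complex.star_def, map_add, _root_.map_mul,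
        Matrix.add_apply, Complex.conj_conj]
      ring
    rw [e2, hQ, mul_one, hU']
    simpa using hv
  have hzeta : ζc = (a * (starRingEnd ℂ) a) * (b * (starRingEnd ℂ) b)
      + (c * (starRingEnd ℂ) c) * (d * (starRingEnd ℂ) d) := by
    rw [hζc, hΦ]
    simp only [ha, hb, hc, hd, dotProduct, mulVec, mul_apply, vecMulVec_apply,
      conjTranspose_apply, Fin.sum_univ_two, Pi.star_apply, Complex.star_def, map_add,
      _root_.map_mul, Matrix.add_apply, Complex.conj_conj]
    ring
  -- convert to real quantities
  have hpa : a * (starRingEnd ℂ) a = (p₁ : ℂ) := by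
    rw [hp₁, Complex.sq_norm, Complex.mul_conj]
  have hqb : b * (starRingEnd ℂ) b = ((Complex.normSq b : ℝ) : ℂ) := Complex.mul_conj b
  have hqc : c * (starRingEnd ℂ) c = ((Complex.normSq c : ℝ) : ℂ) := Complex.mul_conj c
  have hqd : d * (starRingEnd ℂ) d = ((Complex.normSq d : ℝ) : ℂ) := Complex.mul_conj d
  simp only [hpa, hqb, hqc, hqd] at key1 key2 key3 hzeta
  have r1 : p₁ + Complex.normSq c = 1 := by exact_mod_cast key1
  have r2 : p₁ + Complex.normSq b = 1 := by exact_mod_cast key2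
  have r3 : Complex.normSq b + Complex.normSq d = 1 := by exact_mod_cast key3
  have h0 : 0 ≤ p₁ := by rw [hp₁]; positivity
  have h1 : p₁ ≤ 1 := by have := Complex.normSq_nonneg b; linarith
  refine ⟨?_, by nlinarith, by nlinarith [sq_nonneg (2 * p₁ - 1)], ?_, ?_⟩
  · rw [hzeta]
    have hb' : Complex.normSq b = 1 - p₁ := by linarith
    have hc' : Complex.normSq c = 1 - p₁ := by linarith
    have hd' : Complex.normSq d = p₁ := by linarith
    rw [hb', hc', hd']
    push_cast
    ring
  · intro h; nlinarith [sq_nonneg (2 * p₁ - 1)]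
  · intro h; rw [h]; norm_num
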